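/- Let ω(n) count pairs of permutations of [n] with no common rise and let τ(n) be defined by ∑_{n≥0} τ(n) x^n/(n!)^2 = (∑_{n≥0} (-1)^n x^n/(n!)^2)^{-1}. Then ω(n) = τ(n) for all n. -/

import Mathlib

open PowerSeries

/-- A pair of permutations of `[n]`, viewed as words, has no common rise if there is
no position `i` where both words increase. -/
def HasNoCommonRise {n : ℕ} (π ξ : Equiv.Perm (Fin n)) : Prop :=
  ¬ ∃ i : ℕ, ∃ h : i + 1 < n,
    π ⟨i, Nat.lt_of_succ_lt h⟩ < π ⟨i + 1, h⟩ ∧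
    ξ ⟨i, Nat.lt_of_succ_lt h⟩ < ξ ⟨i + 1, h⟩

/-- `ω n` is the number of pairs of permutations of `[n]` with no common rise. -/
noncomputable def omegaNCR (n : ℕ) : ℕ :=
  Nat.card {p : Equiv.Perm (Fin n) × Equiv.Perm (Fin n) // HasNoCommonRise p.1 p.2}

open Finset

variable {n k : ℕ}


def buildFun (hkn : k ≤ n) (A : Finset (Fin n)) (hA : A.card = k)
    (σ : Equiv.Perm (Fin (n - k))) : Fin n → Fin n := fun i =>
  if h : i.val < k then A.orderEmbOfFin hA ⟨i.val, h⟩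
  else Aᶜ.orderEmbOfFin (by simp [Finset.card_compl, hA])
    (σ ⟨i.val - k, by omega⟩)

theorem buildFun_injective (hkn : k ≤ n) (A : Finset (Fin n)) (hA : A.card = k)
    (σ : Equiv.Perm (Fin (n - k))) : Function.Injective (buildFun hkn A hA σ) := by
  intro i j hij
  unfold buildFun at hij
  have hcA : Aᶜ.card = n - k := by simp [Finset.card_compl, hA]
  split_ifs at hij with h1 h2 h2
  · have h3 := (A.orderEmbOfFin hA).injective hij
    have h4 : i.val = j.val := by simpa using congrArg Fin.val h3
    exact Fin.ext h4
  · exfalso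
    have hmem : A.orderEmbOfFin hA ⟨i.val, h1⟩ ∈ A := Finset.orderEmbOfFin_mem _ _ _
    rw [hij] at hmem
    have : _ ∈ Aᶜ := Finset.orderEmbOfFin_mem Aᶜ hcA (σ ⟨j.val - k, by omega⟩)
    exact (Finset.mem_compl.mp this) hmem
  · exfalso
    have hmem : A.orderEmbOfFin hA ⟨j.val, h2⟩ ∈ A := Finset.orderEmbOfFin_mem _ _ _
    rw [← hij] at hmem
    have : _ ∈ Aᶜ := Finset.orderEmbOfFin_mem Aᶜ hcA (σ ⟨i.val - k, by omega⟩)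
    exact (Finset.mem_compl.mp this) hmem
  · have := σ.injective ((Aᶜ.orderEmbOfFin hcA).injective hij)
    have : i.val - k = j.val - k := congrArg Fin.val this
    exact Fin.ext (by omega)

noncomputable def buildPerm (hkn : k ≤ n) (A : Finset (Fin n)) (hA : A.card = k)
    (σ : Equiv.Perm (Fin (n - k))) : Equiv.Perm (Fin n) :=
  Equiv.ofBijective _ (Finite.injective_iff_bijective.mp (buildFun_injective hkn A hA σ))

theorem buildPerm_apply_lt (hkn : k ≤ n) (A : Finset (Fin n)) (hA : A.card = k)
    (σ : Equiv.Perm (Fin (n - k))) (i : Fin n) (h : i.val < k) :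
    buildPerm hkn A hA σ i = A.orderEmbOfFin hA ⟨i.val, h⟩ := by
  simp [buildPerm, Equiv.ofBijective, buildFun, h]

theorem buildPerm_apply_ge (hkn : k ≤ n) (A : Finset (Fin n)) (hA : A.card = k)
    (σ : Equiv.Perm (Fin (n - k))) (i : Fin n) (h : k ≤ i.val) :
    buildPerm hkn A hA σ i = Aᶜ.orderEmbOfFin (by simp [Finset.card_compl, hA])
      (σ ⟨i.val - k, by omega⟩) := by
  simp [buildPerm, Equiv.ofBijective, buildFun, Nat.not_lt.mpr h]

theorem buildPerm_mem_iff (hkn : k ≤ n) (A : Finset (Fin n)) (hA : A.card = k)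
    (σ : Equiv.Perm (Fin (n - k))) (i : Fin n) :
    buildPerm hkn A hA σ i ∈ A ↔ i.val < k := by
  by_cases h : i.val < k
  · simp [buildPerm_apply_lt hkn A hA σ i h, h, Finset.orderEmbOfFin_mem]
  · rw [buildPerm_apply_ge hkn A hA σ i (Nat.not_lt.mp h)]
    simp only [h, iff_false]
    have := Finset.orderEmbOfFin_mem Aᶜ (by simp [Finset.card_compl, hA] : Aᶜ.card = n - k)
      (σ ⟨i.val - k, by omega⟩)
    exact Finset.mem_compl.mp this

theorem buildPerm_lt_prefix (hkn : k ≤ n) (A : Finset (Fin n)) (hA : A.card = k)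
    (σ : Equiv.Perm (Fin (n - k))) (i j : Fin n) (hij : i.val < j.val) (hj : j.val < k) :
    buildPerm hkn A hA σ i < buildPerm hkn A hA σ j := by
  rw [buildPerm_apply_lt hkn A hA σ i (lt_trans hij hj), buildPerm_apply_lt hkn A hA σ j hj]
  exact (A.orderEmbOfFin hA).strictMono (show (⟨i.val, _⟩ : Fin k) < ⟨j.val, hj⟩ from hij)

theorem buildPerm_lt_suffix (hkn : k ≤ n) (A : Finset (Fin n)) (hA : A.card = k)
    (σ : Equiv.Perm (Fin (n - k))) (i j : Fin n) (hi : k ≤ i.val) (hj : k ≤ j.val) :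
    (buildPerm hkn A hA σ i < buildPerm hkn A hA σ j ↔
      σ ⟨i.val - k, by omega⟩ < σ ⟨j.val - k, by omega⟩) := by
  rw [buildPerm_apply_ge hkn A hA σ i hi, buildPerm_apply_ge hkn A hA σ j hj]
  exact (Aᶜ.orderEmbOfFin _).lt_iff_lt

/-- Both words increase at every position strictly inside the prefix of length `m`. -/
def IncrPrefix {n : ℕ} (m : ℕ) (π : Equiv.Perm (Fin n)) : Prop :=
  ∀ i : ℕ, ∀ h : i + 1 < n, i + 1 < m → π ⟨i, Nat.lt_of_succ_lt h⟩ < π ⟨i + 1, h⟩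

/-- No common rise at any position `≥ m`. -/
def NoCRFrom {n : ℕ} (m : ℕ) (π ξ : Equiv.Perm (Fin n)) : Prop :=
  ∀ i : ℕ, m ≤ i → ∀ h : i + 1 < n,
    ¬ (π ⟨i, Nat.lt_of_succ_lt h⟩ < π ⟨i + 1, h⟩ ∧
       ξ ⟨i, Nat.lt_of_succ_lt h⟩ < ξ ⟨i + 1, h⟩)

theorem incrPrefix_mono {n m : ℕ} {π : Equiv.Perm (Fin n)} (hπ : IncrPrefix m π) :
    ∀ (j : ℕ) (hj : j < n), j < m → ∀ (i : ℕ) (hi : i < j), π ⟨i, lt_trans hi hj⟩ < π ⟨j, hj⟩ := by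
  intro j
  induction j with
  | zero => omega
  | succ j ih =>
    intro hj hjm i hi
    have hadj : π ⟨j, Nat.lt_of_succ_lt hj⟩ < π ⟨j + 1, hj⟩ := hπ j hj hjm
    rcases Nat.lt_or_ge i j with h | h
    · exact lt_trans (ih (Nat.lt_of_succ_lt hj) (by omega) i h) hadj
    · have : i = j := by omega
      subst this
      exact hadj

theorem buildPerm_incrPrefix (hkn : k ≤ n) (A : Finset (Fin n)) (hA : A.card = k)
    (σ : Equiv.Perm (Fin (n - k))) : IncrPrefix k (buildPerm hkn A hA σ) := by
  intro i h hik
  exact buildPerm_lt_prefix hkn A hA σ _ _ (by simp) (by simpa using hik)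

theorem buildPerm_noCRFrom (hkn : k ≤ n) (A B : Finset (Fin n)) (hA : A.card = k)
    (hB : B.card = k) (σ τ : Equiv.Perm (Fin (n - k))) (hq : HasNoCommonRise σ τ) :
    NoCRFrom k (buildPerm hkn A hA σ) (buildPerm hkn B hB τ) := by
  intro i hki h hc
  obtain ⟨h1, h2⟩ := hc
  have hik : i - k + 1 < n - k := by omega
  apply hq
  refine ⟨i - k, hik, ?_, ?_⟩
  · have := (buildPerm_lt_suffix hkn A hA σ ⟨i, Nat.lt_of_succ_lt h⟩ ⟨i + 1, h⟩ hki
      (by simp; omega)).mp h1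
    convert this using 2 <;> exact Fin.ext (by simp; omega)
  · have := (buildPerm_lt_suffix hkn B hB τ ⟨i, Nat.lt_of_succ_lt h⟩ ⟨i + 1, h⟩ hki
      (by simp; omega)).mp h2
    convert this using 2 <;> exact Fin.ext (by simp; omega)

theorem buildPerm_image (hkn : k ≤ n) (A : Finset (Fin n)) (hA : A.card = k)
    (σ : Equiv.Perm (Fin (n - k))) (x : Fin n) :
    x ∈ A ↔ ∃ i : Fin n, i.val < k ∧ buildPerm hkn A hA σ i = x := by
  constructor
  · intro hx
    have : x ∈ Set.range (A.orderEmbOfFin hA) := by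
      rw [Finset.range_orderEmbOfFin]; exact hx
    obtain ⟨j, hj⟩ := this
    refine ⟨⟨j.val, by omega⟩, j.2, ?_⟩
    rw [buildPerm_apply_lt hkn A hA σ _ j.2]
    convert hj using 2
  · rintro ⟨i, hik, rfl⟩
    exact (buildPerm_mem_iff hkn A hA σ i).mpr hik

theorem buildPerm_sigma_inj (hkn : k ≤ n) (A : Finset (Fin n)) (hA hA' : A.card = k)
    (σ σ' : Equiv.Perm (Fin (n - k)))
    (h : buildPerm hkn A hA σ = buildPerm hkn A hA' σ') : σ = σ' := by
  ext j
  have hj : k + j.val < n := by omega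
  have this : buildPerm hkn A hA σ ⟨k + j.val, hj⟩ = buildPerm hkn A hA' σ' ⟨k + j.val, hj⟩ := by
    rw [h]
  rw [buildPerm_apply_ge hkn A hA σ _ (by simp), buildPerm_apply_ge hkn A hA' σ' _ (by simp)]
    at this
  have h2 := (Aᶜ.orderEmbOfFin _).injective this
  have h3 : (⟨k + j.val - k, by omega⟩ : Fin (n - k)) = j := Fin.ext (by simp)
  rw [h3] at h2
  exact congrArg Fin.val h2

theorem exists_buildPerm (hkn : k ≤ n) (π : Equiv.Perm (Fin n)) (hπ : IncrPrefix k π) :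
    ∃ (A : Finset (Fin n)) (hA : A.card = k) (σ : Equiv.Perm (Fin (n - k))),
      buildPerm hkn A hA σ = π ∧
      ∀ j j' : Fin (n - k), (σ j < σ j' ↔
        π ⟨k + j.val, by omega⟩ < π ⟨k + j'.val, by omega⟩) := by
  classical
  set g : Fin k → Fin n := fun j => π (Fin.castLE hkn j) with hg
  have hginj : Function.Injective g := π.injective.comp (Fin.castLE_injective hkn)
  set A : Finset (Fin n) := Finset.univ.image g with hAdef
  have hA : A.card = k := by
    rw [hAdef, Finset.card_image_of_injective _ hginj, Finset.card_univ, Fintype.card_fin]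
  have hgmem : ∀ x, g x ∈ A := fun x => Finset.mem_image_of_mem _ (Finset.mem_univ x)
  have hgmono : StrictMono g := by
    intro a b hab
    have := incrPrefix_mono hπ b.val (by omega) b.2 a.val hab
    convert this using 2 <;> rfl
  have hgeq : g = A.orderEmbOfFin hA := Finset.orderEmbOfFin_unique hA hgmem hgmono
  have hmemc : ∀ j : Fin (n - k), π ⟨k + j.val, by omega⟩ ∈ Aᶜ := by
    intro j
    rw [Finset.mem_compl]
    intro hmem
    obtain ⟨x, _, hx⟩ := Finset.mem_image.mp hmem
    have := π.injective hx
    have : x.val = k + j.val := congrArg Fin.val this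
    omega
  have hcA : Aᶜ.card = n - k := by simp [Finset.card_compl, hA]
  set σfun : Fin (n - k) → Fin (n - k) :=
    fun j => (Aᶜ.orderIsoOfFin hcA).symm ⟨π ⟨k + j.val, by omega⟩, hmemc j⟩ with hσf
  have hσinj : Function.Injective σfun := by
    intro j j' h
    have h2 := (Aᶜ.orderIsoOfFin hcA).symm.injective h
    have h3 := π.injective (congrArg Subtype.val h2)
    have : k + j.val = k + j'.val := congrArg Fin.val h3
    exact Fin.ext (by omega)
  set σ : Equiv.Perm (Fin (n - k)) :=
    Equiv.ofBijective σfun (Finite.injective_iff_bijective.mp hσinj) with hσ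
  have hσapp : ∀ j, σ j = σfun j := fun j => rfl
  have hprop : ∀ j j' : Fin (n - k), (σ j < σ j' ↔
      π ⟨k + j.val, by omega⟩ < π ⟨k + j'.val, by omega⟩) := by
    intro j j'
    exact Iff.trans ((Aᶜ.orderIsoOfFin hcA).symm.lt_iff_lt) Subtype.mk_lt_mk
  refine ⟨A, hA, σ, ?_, hprop⟩
  refine Equiv.ext fun i => ?_
  rcases Nat.lt_or_ge i.val k with h | h
  · rw [buildPerm_apply_lt hkn A hA σ i h, ← hgeq]
    exact congrArg π (Fin.ext rfl)
  · rw [buildPerm_apply_ge hkn A hA σ i h]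
    calc (Aᶜ.orderEmbOfFin _) (σ ⟨i.val - k, by omega⟩)
        = ↑((Aᶜ.orderIsoOfFin hcA) ((Aᶜ.orderIsoOfFin hcA).symm
            ⟨π ⟨k + (⟨i.val - k, by omega⟩ : Fin (n - k)).val, by omega⟩,
              hmemc ⟨i.val - k, by omega⟩⟩)) := rfl
      _ = π ⟨k + (i.val - k), by omega⟩ := by rw [OrderIso.apply_symm_apply]
      _ = π i := congrArg π (Fin.ext (show k + (i.val - k) = i.val by omega))


noncomputable def Tcard (n m : ℕ) : ℕ :=
  Nat.card {p : Equiv.Perm (Fin n) × Equiv.Perm (Fin n) //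
    IncrPrefix m p.1 ∧ IncrPrefix m p.2 ∧ NoCRFrom m p.1 p.2}

noncomputable def Ucard (n m : ℕ) : ℕ :=
  Nat.card {p : Equiv.Perm (Fin n) × Equiv.Perm (Fin n) //
    IncrPrefix (m + 1) p.1 ∧ IncrPrefix (m + 1) p.2 ∧ NoCRFrom m p.1 p.2}

abbrev TSub (n m : ℕ) := {p : Equiv.Perm (Fin n) × Equiv.Perm (Fin n) //
    IncrPrefix m p.1 ∧ IncrPrefix m p.2 ∧ NoCRFrom m p.1 p.2}

abbrev SrcTy (n k : ℕ) := {A : Finset (Fin n) // A.card = k} ×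
  ({B : Finset (Fin n) // B.card = k} ×
    {q : Equiv.Perm (Fin (n - k)) × Equiv.Perm (Fin (n - k)) // HasNoCommonRise q.1 q.2})

noncomputable def Phi (n k : ℕ) (hkn : k ≤ n) (x : SrcTy n k) : TSub n k :=
  ⟨(buildPerm hkn x.1.1 x.1.2 x.2.2.1.1, buildPerm hkn x.2.1.1 x.2.1.2 x.2.2.1.2),
    buildPerm_incrPrefix hkn x.1.1 x.1.2 x.2.2.1.1,
    buildPerm_incrPrefix hkn x.2.1.1 x.2.1.2 x.2.2.1.2,
    buildPerm_noCRFrom hkn x.1.1 x.2.1.1 x.1.2 x.2.1.2 x.2.2.1.1 x.2.2.1.2 x.2.2.2⟩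

theorem Phi_injective (n k : ℕ) (hkn : k ≤ n) : Function.Injective (Phi n k hkn) := by
  rintro ⟨⟨A, hA⟩, ⟨B, hB⟩, ⟨⟨σ, τ⟩, hq⟩⟩ ⟨⟨A', hA'⟩, ⟨B', hB'⟩, ⟨⟨σ', τ'⟩, hq'⟩⟩ h
  simp only [Phi, Subtype.mk.injEq, Prod.mk.injEq] at h
  obtain ⟨h1, h2⟩ := h
  have hAA : A = A' := by
    ext x
    rw [buildPerm_image hkn A hA σ x, h1, ← buildPerm_image hkn A' hA' σ' x]
  subst hAA
  have hBB : B = B' := by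
    ext x
    rw [buildPerm_image hkn B hB τ x, h2, ← buildPerm_image hkn B' hB' τ' x]
  subst hBB
  have hσσ : σ = σ' := buildPerm_sigma_inj hkn A hA hA' σ σ' h1
  have hττ : τ = τ' := buildPerm_sigma_inj hkn B hB hB' τ τ' h2
  subst hσσ; subst hττ
  rfl

theorem Phi_surjective (n k : ℕ) (hkn : k ≤ n) : Function.Surjective (Phi n k hkn) := by
  rintro ⟨⟨π, ξ⟩, hπ, hξ, hcr⟩
  obtain ⟨A, hA, σ, hbσ, hpσ⟩ := exists_buildPerm hkn π hπ
  obtain ⟨B, hB, τ, hbτ, hpτ⟩ := exists_buildPerm hkn ξ hξ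
  have hq : HasNoCommonRise σ τ := by
    rintro ⟨j, hj, hσlt, hτlt⟩
    refine hcr (k + j) (Nat.le_add_right k j) (by omega) ⟨?_, ?_⟩
    · have := (hpσ ⟨j, Nat.lt_of_succ_lt hj⟩ ⟨j + 1, hj⟩).mp hσlt
      convert this using 2 <;> exact Fin.ext (by simp only [Fin.val_mk] <;> omega)
    · have := (hpτ ⟨j, Nat.lt_of_succ_lt hj⟩ ⟨j + 1, hj⟩).mp hτlt
      convert this using 2 <;> exact Fin.ext (by simp only [Fin.val_mk] <;> omega)
  refine ⟨⟨⟨A, hA⟩, ⟨B, hB⟩, ⟨(σ, τ), hq⟩⟩, ?_⟩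
  apply Subtype.ext
  simp only [Phi, Prod.mk.injEq]
  exact ⟨hbσ, hbτ⟩

set_option maxHeartbeats 1000000 in
theorem Tcard_eq (n k : ℕ) (hkn : k ≤ n) :
    Tcard n k = n.choose k * (n.choose k * omegaNCR (n - k)) := by
  classical
  have key : Nat.card (SrcTy n k) = Tcard n k :=
    Nat.card_eq_of_bijective (Phi n k hkn) ⟨Phi_injective n k hkn, Phi_surjective n k hkn⟩
  rw [← key, SrcTy, Nat.card_prod, Nat.card_prod]
  congr 1
  · rw [Nat.card_eq_fintype_card, Fintype.card_finset_len, Fintype.card_fin]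
  rw [Nat.card_eq_fintype_card, Fintype.card_finset_len, Fintype.card_fin]
  rfl

theorem nat_card_split {α : Type*} [Finite α] (p q : α → Prop) :
    Nat.card {x // p x} = Nat.card {x // p x ∧ q x} + Nat.card {x // p x ∧ ¬ q x} := by
  classical
  rw [← Nat.card_sum]
  apply Nat.card_congr
  exact (Equiv.sumCompl (fun y : {x // p x} => q y.val)).symm.trans
    (Equiv.sumCongr (Equiv.subtypeSubtypeEquivSubtypeInter p q)
      (Equiv.subtypeSubtypeEquivSubtypeInter p (fun x => ¬ q x)))

/-- There is a common rise at position `m`. -/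
def CRat {n : ℕ} (m : ℕ) (π ξ : Equiv.Perm (Fin n)) : Prop :=
  ∃ h : m + 1 < n,
    π ⟨m, Nat.lt_of_succ_lt h⟩ < π ⟨m + 1, h⟩ ∧ ξ ⟨m, Nat.lt_of_succ_lt h⟩ < ξ ⟨m + 1, h⟩

theorem Tcard_split (n m : ℕ) (hm : m + 2 ≤ n) :
    Tcard n (m + 1) = Ucard n (m + 1) + Ucard n m := by
  rw [Tcard, nat_card_split _ (fun p => CRat m p.1 p.2)]
  congr 1
  · apply Nat.card_congr
    apply Equiv.subtypeEquivRight
    rintro ⟨π, ξ⟩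
    constructor
    · rintro ⟨⟨hπ, hξ, hcr⟩, hm1, hrπ, hrξ⟩
      refine ⟨?_, ?_, hcr⟩ <;>
      · intro i h hi
        rcases Nat.lt_or_ge (i + 1) (m + 1) with h' | h'
        · first | exact hπ i h h' | exact hξ i h h'
        · have : i = m := by omega
          subst this
          first | exact hrπ | exact hrξ
    · rintro ⟨hπ, hξ, hcr⟩
      have hm1 : m + 1 < n := by omega
      exact ⟨⟨fun i h hi => hπ i h (by omega), fun i h hi => hξ i h (by omega), hcr⟩,
        hm1, hπ m hm1 (by omega), hξ m hm1 (by omega)⟩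
  · apply Nat.card_congr
    apply Equiv.subtypeEquivRight
    rintro ⟨π, ξ⟩
    constructor
    · rintro ⟨⟨hπ, hξ, hcr⟩, hncr⟩
      refine ⟨hπ, hξ, fun i hi h hc => ?_⟩
      rcases Nat.lt_or_ge i (m + 1) with h' | h'
      · have : i = m := by omega
        subst this
        exact hncr ⟨h, hc⟩
      · exact hcr i h' h hc
    · rintro ⟨hπ, hξ, hcr⟩
      refine ⟨⟨hπ, hξ, fun i hi h hc => hcr i (by omega) h hc⟩, ?_⟩
      rintro ⟨h, hc⟩
      exact hcr m (le_refl m) h hc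

theorem Ucard_zero (n : ℕ) : Ucard n 0 = omegaNCR n := by
  apply Nat.card_congr
  apply Equiv.subtypeEquivRight
  rintro ⟨π, ξ⟩
  constructor
  · rintro ⟨-, -, hcr⟩ ⟨i, h, hc⟩
    exact hcr i (Nat.zero_le i) h hc
  · intro h
    exact ⟨fun i h hi => by omega, fun i h hi => by omega,
      fun i hi hh hc => h ⟨i, hh, hc⟩⟩

theorem Tcard_last (n : ℕ) (hn : 1 ≤ n) : Tcard n n = Ucard n (n - 1) := by
  apply Nat.card_congr
  apply Equiv.subtypeEquivRight
  rintro ⟨π, ξ⟩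
  have hvac : ∀ (m : ℕ), n - 1 ≤ m → NoCRFrom m π ξ := by
    intro m hm i hi h
    omega
  have hn1 : n - 1 + 1 = n := by omega
  constructor
  · rintro ⟨hπ, hξ, -⟩
    exact ⟨by rw [hn1]; exact hπ, by rw [hn1]; exact hξ, hvac _ le_rfl⟩
  · rintro ⟨hπ, hξ, -⟩
    rw [hn1] at hπ hξ
    exact ⟨hπ, hξ, hvac _ (by omega)⟩

theorem telescope (n : ℕ) (hn : 1 ≤ n) :
    (omegaNCR n : ℚ) = ∑ j ∈ Finset.range n, (-1 : ℚ) ^ j * (Tcard n (j + 1) : ℚ) := by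
  obtain ⟨m, rfl⟩ : ∃ m, n = m + 1 := ⟨n - 1, by omega⟩
  rw [Finset.sum_range_succ]
  have hstep : ∀ j ∈ Finset.range m, (-1 : ℚ) ^ j * (Tcard (m + 1) (j + 1) : ℚ)
      = ((-1 : ℚ) ^ j * (Ucard (m + 1) j : ℚ) -
         (-1 : ℚ) ^ (j + 1) * (Ucard (m + 1) (j + 1) : ℚ)) := by
    intro j hj
    simp only [Finset.mem_range] at hj
    rw [Tcard_split (m + 1) j (by omega)]
    push_cast
    ring
  rw [Finset.sum_congr rfl hstep,
    Finset.sum_range_sub' (fun j => (-1 : ℚ) ^ j * (Ucard (m + 1) j : ℚ))]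
  have hlast : (Tcard (m + 1) (m + 1) : ℚ) = (Ucard (m + 1) m : ℚ) := by
    rw [Tcard_last (m + 1) (by omega)]
    norm_num
  rw [hlast, Ucard_zero]
  ring

theorem key_identity (n : ℕ) (hn : 1 ≤ n) :
    ∑ k ∈ Finset.range (n + 1),
      (-1 : ℚ) ^ k * (n.choose k : ℚ) ^ 2 * (omegaNCR (n - k) : ℚ) = 0 := by
  rw [Finset.sum_range_succ']
  have h1 : ∀ i ∈ Finset.range n,
      (-1 : ℚ) ^ (i + 1) * (n.choose (i + 1) : ℚ) ^ 2 * (omegaNCR (n - (i + 1)) : ℚ)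
      = -((-1 : ℚ) ^ i * (Tcard n (i + 1) : ℚ)) := by
    intro i hi
    simp only [Finset.mem_range] at hi
    rw [Tcard_eq n (i + 1) (by omega)]
    push_cast
    ring
  rw [Finset.sum_congr rfl h1, Finset.sum_neg_distrib, ← telescope n hn]
  simp

theorem key_identity' (m : ℕ) (hm : 1 ≤ m) :
    ∑ k ∈ Finset.range (m + 1),
      (-1 : ℚ) ^ (m - k) * (m.choose k : ℚ) ^ 2 * (omegaNCR k : ℚ) = 0 := by
  rw [← Finset.sum_range_reflect]
  rw [← key_identity m hm]
  apply Finset.sum_congr rfl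
  intro j hj
  simp only [Finset.mem_range] at hj
  have hjm : j ≤ m := by omega
  rw [show m + 1 - 1 - j = m - j from by omega, show m - (m - j) = j from by omega,
    Nat.choose_symm hjm]

theorem omega_zero : omegaNCR 0 = 1 := by
  rw [omegaNCR]
  have h : ∀ p : Equiv.Perm (Fin 0) × Equiv.Perm (Fin 0), HasNoCommonRise p.1 p.2 := by
    rintro p ⟨i, h, -⟩
    omega
  rw [Nat.card_congr (Equiv.subtypeUnivEquiv h), Nat.card_prod]
  simp [Nat.card_eq_fintype_card]

theorem omega_series :
    (PowerSeries.mk fun n => (omegaNCR n : ℚ) / ((Nat.factorial n : ℚ)) ^ 2) *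
      (PowerSeries.mk fun n => (-1 : ℚ) ^ n / ((Nat.factorial n : ℚ)) ^ 2) = 1 := by
  ext m
  rw [PowerSeries.coeff_mul, Finset.Nat.sum_antidiagonal_eq_sum_range_succ_mk]
  simp only [PowerSeries.coeff_mk]
  rcases Nat.eq_zero_or_pos m with rfl | hm
  · simp [omega_zero]
  · rw [PowerSeries.coeff_one, if_neg (by omega)]
    have hterm : ∀ k ∈ Finset.range (m + 1),
        (omegaNCR k : ℚ) / ((Nat.factorial k : ℚ)) ^ 2 *
          ((-1 : ℚ) ^ (m - k) / ((Nat.factorial (m - k) : ℚ)) ^ 2)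
        = ((-1 : ℚ) ^ (m - k) * (m.choose k : ℚ) ^ 2 * (omegaNCR k : ℚ)) /
            ((Nat.factorial m : ℚ)) ^ 2 := by
      intro k hk
      simp only [Finset.mem_range] at hk
      have hkm : k ≤ m := by omega
      rw [Nat.cast_choose ℚ hkm]
      have h1 : (Nat.factorial k : ℚ) ≠ 0 := Nat.cast_ne_zero.mpr (Nat.factorial_ne_zero k)
      have h2 : (Nat.factorial (m - k) : ℚ) ≠ 0 := Nat.cast_ne_zero.mpr (Nat.factorial_ne_zero _)
      have h3 : (Nat.factorial m : ℚ) ≠ 0 := Nat.cast_ne_zero.mpr (Nat.factorial_ne_zero m)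
      field_simp
    rw [Finset.sum_congr rfl hterm, ← Finset.sum_div, key_identity' m hm, zero_div]

/-- If `τ` satisfies `∑_{n≥0} τ(n) x^n/(n!)^2 = (∑_{n≥0} (-1)^n x^n/(n!)^2)⁻¹`
(i.e. the product of the two series is `1`), then `ω(n) = τ(n)` for all `n`. -/
theorem stmt_16 (τ : ℕ → ℚ)
    (hτ : (PowerSeries.mk fun n => τ n / ((Nat.factorial n : ℚ)) ^ 2) *
      (PowerSeries.mk fun n => (-1 : ℚ) ^ n / ((Nat.factorial n : ℚ)) ^ 2) = 1) :
    ∀ n : ℕ, (omegaNCR n : ℚ) = τ n := by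
  intro n
  have hG : (PowerSeries.mk fun n => (-1 : ℚ) ^ n / ((Nat.factorial n : ℚ)) ^ 2) ≠ 0 := by
    intro h
    have := congrArg (PowerSeries.coeff (R := ℚ) 0) h
    simp [PowerSeries.coeff_mk] at this
  have heq := mul_right_cancel₀ hG (omega_series.trans hτ.symm)
  have hcoeff := congrArg (PowerSeries.coeff (R := ℚ) n) heq
  simp only [PowerSeries.coeff_mk] at hcoeff
  have hfac : ((Nat.factorial n : ℚ)) ^ 2 ≠ 0 := by
    have := Nat.cast_ne_zero (R := ℚ).mpr (Nat.factorial_ne_zero n)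
    positivity
  field_simp at hcoeff
  exact hcoeff
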